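/- If S has no conjugate points, then for every x, y ∈ ℝ^d and every integer N ≥ 1, there exists a unique extremal sequence (x_n)_{n∈ℤ} with x_0 = x and x_N = y. -/

import Mathlib

noncomputable section

/-- Configuration space `ℝ^d` with the Euclidean norm. -/
abbrev Ed (d : ℕ) := EuclideanSpace ℝ (Fin d)

/-- The point of `ℝ^d` with integer coordinates given by `r ∈ ℤ^d`. -/
def intVec (d : ℕ) (r : Fin d → ℤ) : Ed d := WithLp.toLp 2 (fun i => (r i : ℝ))

/-- A generating function: a `C²` map `S : ℝ^d × ℝ^d → ℝ` which is `ℤ^d`-periodic for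
the diagonal action and satisfies the uniform twist condition
`∑_{i,j} ∂²S/∂xᵢ∂yⱼ (x,y) ξᵢ ξⱼ ≤ -A‖ξ‖²` (expressed via the second derivative of `S`
applied to `((ξ,0),(0,ξ))`). -/
def IsGenFn {d : ℕ} (S : Ed d × Ed d → ℝ) : Prop :=
  ContDiff ℝ 2 S ∧
  (∀ (r : Fin d → ℤ) (x y : Ed d), S (x + intVec d r, y + intVec d r) = S (x, y)) ∧
  ∃ A : ℝ, 0 < A ∧ ∀ (x y ξ : Ed d),
    iteratedFDeriv ℝ 2 S (x, y) ![(ξ, 0), (0, ξ)] ≤ -A * ‖ξ‖ ^ 2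

/-- `∂₁S`, the partial differential of `S` with respect to its first variable. -/
def D1 {d : ℕ} (S : Ed d × Ed d → ℝ) (x y : Ed d) : Ed d →L[ℝ] ℝ :=
  fderiv ℝ (fun z => S (z, y)) x

/-- `∂₂S`, the partial differential of `S` with respect to its second variable. -/
def D2 {d : ℕ} (S : Ed d × Ed d → ℝ) (x y : Ed d) : Ed d →L[ℝ] ℝ :=
  fderiv ℝ (fun z => S (x, z)) y

/-- A bi-infinite sequence `(x_n)_{n∈ℤ}` is extremal if
`∂₂S(x_{n-1}, x_n) + ∂₁S(x_n, x_{n+1}) = 0` for every `n`. -/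
def IsExtremal {d : ℕ} (S : Ed d × Ed d → ℝ) (u : ℤ → Ed d) : Prop :=
  ∀ n : ℤ, D2 S (u (n - 1)) (u n) + D1 S (u n) (u (n + 1)) = 0

/-- The action `S(x_0, …, x_n)` of a finite sequence. -/
def act {d : ℕ} (S : Ed d × Ed d → ℝ) (n : ℕ) (γ : ℕ → Ed d) : ℝ :=
  ∑ k ∈ Finset.range n, S (γ k, γ (k + 1))

/-- The sequence `(x, z_1, …, z_{N-1}, y)` built from interior points `z`. -/
def path {d : ℕ} (x y : Ed d) (N : ℕ) (z : Fin (N - 1) → Ed d) : ℕ → Ed d :=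
  fun k => if h0 : k = 0 then x else if h : k < N then z ⟨k - 1, by omega⟩ else y

/-- The fixed-endpoint action `S_{x,y,N} : (x_1, …, x_{N-1}) ↦ S(x, x_1, …, x_{N-1}, y)`. -/
def fixedAct {d : ℕ} (S : Ed d × Ed d → ℝ) (x y : Ed d) (N : ℕ) :
    (Fin (N - 1) → Ed d) → ℝ :=
  fun z => act S N (path x y N z)

/-- `S` has no conjugate points: for all `x, y` and `N ≥ 2`, the fixed-endpoint action
`S_{x,y,N}` has exactly one critical point, and attains its global minimum there. -/
def NoConjPts {d : ℕ} (S : Ed d × Ed d → ℝ) : Prop :=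
  ∀ (x y : Ed d) (N : ℕ), 2 ≤ N →
    ∃ z : Fin (N - 1) → Ed d,
      fderiv ℝ (fixedAct S x y N) z = 0 ∧
      (∀ w, fixedAct S x y N z ≤ fixedAct S x y N w) ∧
      (∀ z', fderiv ℝ (fixedAct S x y N) z' = 0 → z' = z)

/-- `A_N(x,y)`: the minimum of the fixed-endpoint action `S_{x,y,N}` for `N ≥ 2`,
and `S(x,y)` for `N = 1`. -/
def AN {d : ℕ} (S : Ed d × Ed d → ℝ) (N : ℕ) (x y : Ed d) : ℝ :=
  if N ≤ 1 then S (x, y) else sInf (Set.range (fixedAct S x y N))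

/-- The minimizing holonomic value `Σ̃(S)`. -/
def holVal {d : ℕ} (S : Ed d × Ed d → ℝ) : ℝ :=
  sInf { v : ℝ | ∃ n : ℕ, 1 ≤ n ∧ ∃ γ : ℕ → Ed d,
    (∃ r : Fin d → ℤ, γ n - γ 0 = intVec d r) ∧ v = act S n γ / n }

/-- The normalized action `S̃(x_0, …, x_n) = S(x_0, …, x_n) - n Σ̃(S)`. -/
def actTilde {d : ℕ} (S : Ed d × Ed d → ℝ) (n : ℕ) (γ : ℕ → Ed d) : ℝ :=
  act S n γ - n * holVal S

/-- The Mañé potential `π(x,y)`. -/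
def manePot {d : ℕ} (S : Ed d × Ed d → ℝ) (x y : Ed d) : ℝ :=
  sInf { v : ℝ | ∃ n : ℕ, 1 ≤ n ∧ ∃ γ : ℕ → Ed d,
    γ 0 = x ∧ (∃ r : Fin d → ℤ, γ n - y = intVec d r) ∧ v = actTilde S n γ }

/-- The Aubry set `Ā(S) ⊂ ℝ^d × ℝ^d`. -/
def aubry {d : ℕ} (S : Ed d × Ed d → ℝ) : Set (Ed d × Ed d) :=
  { p | ∀ ε > 0, ∃ n : ℕ, 1 ≤ n ∧ ∃ γ : ℕ → Ed d,
      (∃ r : Fin d → ℤ, γ n - γ 0 = intVec d r) ∧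
      ‖p.1 - γ 0‖ < ε ∧ ‖p.2 - γ 1‖ < ε ∧ actTilde S n γ < ε }

/-- The generating function `S_c(x,y) = S(x,y) + c(x - y)` associated to a cohomology
class `c ∈ (ℝ^d)*`. -/
def Sc {d : ℕ} (S : Ed d × Ed d → ℝ) (c : Ed d →L[ℝ] ℝ) : Ed d × Ed d → ℝ :=
  fun p => S p + c (p.1 - p.2)



set_option maxHeartbeats 1000000

namespace Stmt4Aux

lemma mono_ineq {E : Type*} [NormedAddCommGroup E] [NormedSpace ℝ E] (F : E → (E →L[ℝ] ℝ)) (hF : ContDiff ℝ 1 F) (A : ℝ)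
    (hmono : ∀ y ξ, fderiv ℝ F y ξ ξ ≤ -A * ‖ξ‖ ^ 2) (y₁ y₂ : E) :
    F y₂ (y₂ - y₁) - F y₁ (y₂ - y₁) ≤ -A * ‖y₂ - y₁‖ ^ 2 := by
  set ξ := y₂ - y₁ with hξ
  set φ : ℝ → ℝ := fun t => F (y₁ + t • ξ) ξ with hφdef
  have hline : ∀ t : ℝ, HasDerivAt (fun t : ℝ => y₁ + t • ξ) ξ t := by
    intro t
    simpa using ((hasDerivAt_id t).smul_const ξ).const_add y₁
  have hφ : ∀ t : ℝ, HasDerivAt φ (fderiv ℝ F (y₁ + t • ξ) ξ ξ) t := by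
    intro t
    have h1 : HasFDerivAt F (fderiv ℝ F (y₁ + t • ξ)) (y₁ + t • ξ) :=
      (hF.differentiable one_ne_zero (y₁ + t • ξ)).hasFDerivAt
    have h2 := h1.comp_hasDerivAt t (hline t)
    have h3 := (ContinuousLinearMap.apply ℝ ℝ ξ).hasFDerivAt.comp_hasDerivAt t h2
    exact h3
  obtain ⟨c, _, hc⟩ := exists_hasDerivAt_eq_slope φ
    (fun t => fderiv ℝ F (y₁ + t • ξ) ξ ξ) zero_lt_one
    (fun t _ => (hφ t).continuousAt.continuousWithinAt)
    (fun t _ => hφ t)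
  have h1 : φ 1 = F y₂ ξ := by simp [hφdef, hξ]
  have h0 : φ 0 = F y₁ ξ := by simp [hφdef]
  have := hmono (y₁ + c • ξ) ξ
  rw [hc] at this
  rw [h1, h0] at this
  calc F y₂ ξ - F y₁ ξ = (F y₂ ξ - F y₁ ξ) / (1 - 0) := by norm_num
    _ ≤ -A * ‖ξ‖ ^ 2 := by simpa using this

lemma anti_lip {E : Type*} [NormedAddCommGroup E] [NormedSpace ℝ E] (F : E → (E →L[ℝ] ℝ)) (hF : ContDiff ℝ 1 F) (A : ℝ) (hA : 0 < A)
    (hmono : ∀ y ξ, fderiv ℝ F y ξ ξ ≤ -A * ‖ξ‖ ^ 2) (y₁ y₂ : E) :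
    ‖y₂ - y₁‖ ≤ A⁻¹ * ‖F y₂ - F y₁‖ := by
  rcases eq_or_ne y₂ y₁ with rfl | hne
  · simp only [sub_self, norm_zero]
    positivity
  · have key := mono_ineq F hF A hmono y₁ y₂
    have h1 : A * ‖y₂ - y₁‖ ^ 2 ≤ (F y₁ - F y₂) (y₂ - y₁) := by
      simp only [ContinuousLinearMap.sub_apply]
      nlinarith [key]
    have h2 : (F y₁ - F y₂) (y₂ - y₁) ≤ ‖F y₁ - F y₂‖ * ‖y₂ - y₁‖ :=
      le_trans (le_abs_self _) ((F y₁ - F y₂).le_opNorm _)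
    have hpos : (0:ℝ) < ‖y₂ - y₁‖ := by
      rw [norm_pos_iff]; exact sub_ne_zero.mpr hne
    have h3 : A * ‖y₂ - y₁‖ ≤ ‖F y₂ - F y₁‖ := by
      rw [show F y₂ - F y₁ = -(F y₁ - F y₂) by abel, norm_neg]; nlinarith
    calc ‖y₂ - y₁‖ = A⁻¹ * (A * ‖y₂ - y₁‖) := by field_simp
      _ ≤ A⁻¹ * ‖F y₂ - F y₁‖ := by
          apply mul_le_mul_of_nonneg_left h3 (by positivity)


lemma bij_twist {E : Type*} [NormedAddCommGroup E] [NormedSpace ℝ E]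
    [FiniteDimensional ℝ E] (F : E → (E →L[ℝ] ℝ)) (hF : ContDiff ℝ 1 F) (A : ℝ) (hA : 0 < A)
    (hmono : ∀ y ξ, fderiv ℝ F y ξ ξ ≤ -A * ‖ξ‖ ^ 2) :
    Function.Bijective F := by
  constructor
  · intro y₁ y₂ hFeq
    have := anti_lip F hF A hA hmono y₁ y₂
    rw [hFeq] at this
    simp only [sub_self, norm_zero, mul_zero] at this
    have : ‖y₂ - y₁‖ = 0 := le_antisymm this (norm_nonneg _)
    rw [norm_eq_zero, sub_eq_zero] at this
    exact this.symm
  · -- surjective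
    have hDinj : ∀ y : E, Function.Injective (fderiv ℝ F y) := by
      intro y η₁ η₂ heq
      have h0 : fderiv ℝ F y (η₁ - η₂) = 0 := by
        rw [map_sub, heq, sub_self]
      have := hmono y (η₁ - η₂)
      rw [h0] at this
      simp only [ContinuousLinearMap.zero_apply] at this
      have : ‖η₁ - η₂‖ ^ 2 ≤ 0 := by nlinarith
      have : ‖η₁ - η₂‖ = 0 := by nlinarith [sq_nonneg (‖η₁ - η₂‖), norm_nonneg (η₁ - η₂)]
      rw [norm_eq_zero, sub_eq_zero] at this
      exact this
    have hfr : Module.finrank ℝ E = Module.finrank ℝ (E →L[ℝ] ℝ) := by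
      rw [← (LinearMap.toContinuousLinearMap (𝕜 := ℝ) (E := E) (F' := ℝ)).finrank_eq]
      rw [Module.finrank_linearMap]
      simp
    set eqv : ∀ y : E, E ≃L[ℝ] (E →L[ℝ] ℝ) := fun y =>
      ((fderiv ℝ F y).toLinearMap.linearEquivOfInjective (hDinj y)
        hfr).toContinuousLinearEquiv with heqv
    have heqvcoe : ∀ y : E, ((eqv y : E →L[ℝ] (E →L[ℝ] ℝ)) : E → (E →L[ℝ] ℝ))
        = fderiv ℝ F y := fun y => rfl
    have hstrict : ∀ y : E, HasStrictFDerivAt F ((eqv y : E →L[ℝ] (E →L[ℝ] ℝ))) y := by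
      intro y
      have h := (hF.contDiffAt (x := y)).hasStrictFDerivAt one_ne_zero
      exact h
    have hopen : IsOpen (Set.range F) := by
      rw [isOpen_iff_mem_nhds]
      rintro p ⟨y, rfl⟩
      have hmap := (hstrict y).map_nhds_eq_of_equiv
      rw [← hmap]
      exact Filter.mem_map.2 (by rw [Set.preimage_range]; exact Filter.univ_mem)
    have hclosed : IsClosed (Set.range F) := by
      apply IsSeqClosed.isClosed
      intro ys p hmem htend
      choose g hg using hmem
      have key : ∀ m n : ℕ, dist (g m) (g n) ≤ A⁻¹ * dist (ys m) (ys n) := by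
        intro m n
        rw [dist_eq_norm, dist_eq_norm, ← hg m, ← hg n]
        exact anti_lip F hF A hA hmono (g n) (g m)
      have hcauchy : CauchySeq g := by
        rw [Metric.cauchySeq_iff]
        intro ε hε
        obtain ⟨M, hM⟩ := (Metric.cauchySeq_iff).1 htend.cauchySeq (A * ε) (by positivity)
        refine ⟨M, fun m hm n hn => lt_of_le_of_lt (key m n) ?_⟩
        have := hM m hm n hn
        calc A⁻¹ * dist (ys m) (ys n) < A⁻¹ * (A * ε) := by
              apply mul_lt_mul_of_pos_left this (by positivity)
          _ = ε := by field_simp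
      obtain ⟨y, hy⟩ := cauchySeq_tendsto_of_complete hcauchy
      refine ⟨y, ?_⟩
      have h1 : Filter.Tendsto (fun n => F (g n)) Filter.atTop (nhds (F y)) :=
        ((hF.continuous.tendsto y).comp hy)
      have h2 : (fun n => F (g n)) = ys := funext hg
      rw [h2] at h1
      exact tendsto_nhds_unique h1 htend
    haveI hconn : PreconnectedSpace (E →L[ℝ] ℝ) :=
      ⟨(convex_univ : Convex ℝ (Set.univ : Set (E →L[ℝ] ℝ))).isPreconnected⟩
    have huniv : Set.range F = Set.univ :=
      IsClopen.eq_univ ⟨hclosed, hopen⟩ ⟨F 0, 0, rfl⟩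
    intro p
    have hp : p ∈ Set.range F := huniv ▸ Set.mem_univ p
    exact hp


variable {d : ℕ} {S : Ed d × Ed d → ℝ}

lemma hasFDerivAt_fst_slot (hC2 : ContDiff ℝ 2 S) (a b : Ed d) :
    HasFDerivAt (fun z => S (z, b)) ((fderiv ℝ S (a, b)).comp
      (ContinuousLinearMap.inl ℝ (Ed d) (Ed d))) a := by
  have h1 : HasFDerivAt (fun z : Ed d => (z, b))
      (ContinuousLinearMap.inl ℝ (Ed d) (Ed d)) a := by
    have := (hasFDerivAt_id (𝕜 := ℝ) a).prodMk (hasFDerivAt_const (𝕜 := ℝ) b a)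
    exact this
  exact ((hC2.differentiable (by norm_num) _).hasFDerivAt).comp a h1

lemma hasFDerivAt_snd_slot (hC2 : ContDiff ℝ 2 S) (a b : Ed d) :
    HasFDerivAt (fun z => S (a, z)) ((fderiv ℝ S (a, b)).comp
      (ContinuousLinearMap.inr ℝ (Ed d) (Ed d))) b := by
  have h1 : HasFDerivAt (fun z : Ed d => (a, z))
      (ContinuousLinearMap.inr ℝ (Ed d) (Ed d)) b := by
    have := (hasFDerivAt_const (𝕜 := ℝ) a b).prodMk (hasFDerivAt_id (𝕜 := ℝ) b)
    exact this
  exact ((hC2.differentiable (by norm_num) _).hasFDerivAt).comp b h1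

lemma d1_eq (hC2 : ContDiff ℝ 2 S) (a b : Ed d) :
    D1 S a b = (fderiv ℝ S (a, b)).comp (ContinuousLinearMap.inl ℝ (Ed d) (Ed d)) :=
  (hasFDerivAt_fst_slot hC2 a b).fderiv

lemma d2_eq (hC2 : ContDiff ℝ 2 S) (a b : Ed d) :
    D2 S a b = (fderiv ℝ S (a, b)).comp (ContinuousLinearMap.inr ℝ (Ed d) (Ed d)) :=
  (hasFDerivAt_snd_slot hC2 a b).fderiv

/-- precomposition with inl, as a CLM -/
def Phi1 (d : ℕ) : ((Ed d × Ed d) →L[ℝ] ℝ) →L[ℝ] (Ed d →L[ℝ] ℝ) :=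
  (ContinuousLinearMap.compL ℝ (Ed d) (Ed d × Ed d) ℝ).flip
    (ContinuousLinearMap.inl ℝ (Ed d) (Ed d))

def Phi2 (d : ℕ) : ((Ed d × Ed d) →L[ℝ] ℝ) →L[ℝ] (Ed d →L[ℝ] ℝ) :=
  (ContinuousLinearMap.compL ℝ (Ed d) (Ed d × Ed d) ℝ).flip
    (ContinuousLinearMap.inr ℝ (Ed d) (Ed d))

lemma bij_D1 (hC2 : ContDiff ℝ 2 S) (A : ℝ) (hA : 0 < A)
    (htwist : ∀ (x y ξ : Ed d),
      iteratedFDeriv ℝ 2 S (x, y) ![(ξ, 0), (0, ξ)] ≤ -A * ‖ξ‖ ^ 2)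
    (b : Ed d) : Function.Bijective (fun c => D1 S b c) := by
  have hfd : ContDiff ℝ 1 (fderiv ℝ S) := hC2.fderiv_right (by norm_num)
  have hFeq : (fun c => D1 S b c) = fun c => Phi1 d (fderiv ℝ S (b, c)) := by
    funext c
    rw [d1_eq hC2 b c]
    rfl
  rw [hFeq]
  apply bij_twist _ ?_ A hA ?_
  · exact (Phi1 d).contDiff.comp (hfd.comp (contDiff_const.prodMk contDiff_id))
  · intro c ξ
    have hg : HasFDerivAt (fun c : Ed d => (b, c))
        (ContinuousLinearMap.inr ℝ (Ed d) (Ed d)) c := by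
      have := (hasFDerivAt_const (𝕜 := ℝ) b c).prodMk (hasFDerivAt_id (𝕜 := ℝ) c)
      exact this
    have hf' : HasFDerivAt (fderiv ℝ S) (fderiv ℝ (fderiv ℝ S) (b, c)) (b, c) :=
      (hfd.differentiable one_ne_zero _).hasFDerivAt
    have hcomp : HasFDerivAt (fun c => Phi1 d (fderiv ℝ S (b, c)))
        ((Phi1 d).comp ((fderiv ℝ (fderiv ℝ S) (b, c)).comp
          (ContinuousLinearMap.inr ℝ (Ed d) (Ed d)))) c :=
      ((Phi1 d).hasFDerivAt).comp c ((hf'.comp c hg))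
    rw [hcomp.fderiv]
    have happ : ((Phi1 d).comp ((fderiv ℝ (fderiv ℝ S) (b, c)).comp
        (ContinuousLinearMap.inr ℝ (Ed d) (Ed d)))) ξ ξ
        = fderiv ℝ (fderiv ℝ S) (b, c) ((0 : Ed d), ξ) (ξ, (0 : Ed d)) := rfl
    rw [happ]
    have hsymm : fderiv ℝ (fderiv ℝ S) (b, c) ((0 : Ed d), ξ) (ξ, (0 : Ed d))
        = fderiv ℝ (fderiv ℝ S) (b, c) (ξ, (0 : Ed d)) ((0 : Ed d), ξ) :=
      second_derivative_symmetric
        (fun p => (hC2.differentiable (by norm_num) p).hasFDerivAt) hf' _ _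
    rw [hsymm]
    have := htwist b c ξ
    rwa [iteratedFDeriv_two_apply] at this

lemma bij_D2 (hC2 : ContDiff ℝ 2 S) (A : ℝ) (hA : 0 < A)
    (htwist : ∀ (x y ξ : Ed d),
      iteratedFDeriv ℝ 2 S (x, y) ![(ξ, 0), (0, ξ)] ≤ -A * ‖ξ‖ ^ 2)
    (b : Ed d) : Function.Bijective (fun a => D2 S a b) := by
  have hfd : ContDiff ℝ 1 (fderiv ℝ S) := hC2.fderiv_right (by norm_num)
  have hFeq : (fun a => D2 S a b) = fun a => Phi2 d (fderiv ℝ S (a, b)) := by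
    funext a
    rw [d2_eq hC2 a b]
    rfl
  rw [hFeq]
  apply bij_twist _ ?_ A hA ?_
  · exact (Phi2 d).contDiff.comp (hfd.comp (contDiff_id.prodMk contDiff_const))
  · intro a ξ
    have hg : HasFDerivAt (fun a : Ed d => (a, b))
        (ContinuousLinearMap.inl ℝ (Ed d) (Ed d)) a := by
      have := (hasFDerivAt_id (𝕜 := ℝ) a).prodMk (hasFDerivAt_const (𝕜 := ℝ) b a)
      exact this
    have hf' : HasFDerivAt (fderiv ℝ S) (fderiv ℝ (fderiv ℝ S) (a, b)) (a, b) :=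
      (hfd.differentiable one_ne_zero _).hasFDerivAt
    have hcomp : HasFDerivAt (fun a => Phi2 d (fderiv ℝ S (a, b)))
        ((Phi2 d).comp ((fderiv ℝ (fderiv ℝ S) (a, b)).comp
          (ContinuousLinearMap.inl ℝ (Ed d) (Ed d)))) a :=
      ((Phi2 d).hasFDerivAt).comp a ((hf'.comp a hg))
    rw [hcomp.fderiv]
    have happ : ((Phi2 d).comp ((fderiv ℝ (fderiv ℝ S) (a, b)).comp
        (ContinuousLinearMap.inl ℝ (Ed d) (Ed d)))) ξ ξ
        = fderiv ℝ (fderiv ℝ S) (a, b) (ξ, (0 : Ed d)) ((0 : Ed d), ξ) := rfl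
    rw [happ]
    have := htwist a b ξ
    rwa [iteratedFDeriv_two_apply] at this


lemma fderiv_split (hC2 : ContDiff ℝ 2 S) (a b p q : Ed d) :
    fderiv ℝ S (a, b) (p, q) = D1 S a b p + D2 S a b q := by
  rw [d1_eq hC2, d2_eq hC2]
  have h : ((p, q) : Ed d × Ed d) = (p, 0) + (0, q) := by simp
  rw [h, map_add]
  rfl

/-- The linear coefficient of the `k`-th point of the path as a function of `z`. -/
def Acoef (d N : ℕ) (k : ℕ) : ((Fin (N - 1) → Ed d)) →L[ℝ] Ed d :=
  if h : 0 < k ∧ k < N then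
    ContinuousLinearMap.proj (⟨k - 1, by omega⟩ : Fin (N - 1)) else 0

lemma hasFDerivAt_path (x y : Ed d) (N : ℕ) (z : Fin (N - 1) → Ed d) (k : ℕ) :
    HasFDerivAt (fun z : Fin (N - 1) → Ed d => path x y N z k) (Acoef d N k) z := by
  by_cases h0 : k = 0
  · subst h0
    have he : (fun z : Fin (N - 1) → Ed d => path x y N z 0) = fun _ => x := by
      funext z; simp [path]
    rw [he, Acoef, dif_neg (by omega)]
    exact hasFDerivAt_const x z
  · by_cases h1 : k < N
    · have he : (fun z : Fin (N - 1) → Ed d => path x y N z k)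
          = fun z => z ⟨k - 1, by omega⟩ := by
        funext z; simp [path, h0, h1]
      rw [he, Acoef, dif_pos ⟨by omega, h1⟩]
      exact (ContinuousLinearMap.proj (R := ℝ) (φ := fun _ : Fin (N - 1) => Ed d)
        (⟨k - 1, by omega⟩ : Fin (N - 1))).hasFDerivAt
    · have he : (fun z : Fin (N - 1) → Ed d => path x y N z k) = fun _ => y := by
        funext z; simp [path, h0, h1]
      rw [he, Acoef, dif_neg (by omega)]
      exact hasFDerivAt_const y z

/-- node covector at interior node `j+1` (for `j : Fin (N-1)`) -/
def nodeE (S : Ed d × Ed d → ℝ) (x y : Ed d) (N : ℕ) (z : Fin (N - 1) → Ed d)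
    (j : ℕ) : Ed d →L[ℝ] ℝ :=
  D2 S (path x y N z j) (path x y N z (j + 1))
    + D1 S (path x y N z (j + 1)) (path x y N z (j + 2))

lemma fixedAct_hasFDerivAt (hC2 : ContDiff ℝ 2 S) (x y : Ed d) (N : ℕ) (hN : 1 ≤ N)
    (z : Fin (N - 1) → Ed d) :
    HasFDerivAt (fixedAct S x y N)
      (∑ j : Fin (N - 1), (nodeE S x y N z j).comp (ContinuousLinearMap.proj j)) z := by
  set P := path x y N z with hP
  have hterm : ∀ k ∈ Finset.range N, HasFDerivAt
      (fun z : Fin (N - 1) → Ed d => S (path x y N z k, path x y N z (k + 1)))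
      ((fderiv ℝ S (P k, P (k + 1))).comp ((Acoef d N k).prod (Acoef d N (k + 1)))) z := by
    intro k _
    exact ((hC2.differentiable (by norm_num) _).hasFDerivAt).comp z
      ((hasFDerivAt_path x y N z k).prodMk (hasFDerivAt_path x y N z (k + 1)))
  have hsum := HasFDerivAt.fun_sum hterm
  have hfun : (fun z : Fin (N - 1) → Ed d =>
      ∑ k ∈ Finset.range N, S (path x y N z k, path x y N z (k + 1)))
      = fixedAct S x y N := by
    funext z; simp [fixedAct, act]
  rw [hfun] at hsum
  have hmaps : (∑ j : Fin (N - 1), (nodeE S x y N z j).comp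
      (ContinuousLinearMap.proj j))
      = ∑ k ∈ Finset.range N, (fderiv ℝ S (P k, P (k + 1))).comp
        ((Acoef d N k).prod (Acoef d N (k + 1))) := by
    refine ContinuousLinearMap.ext fun v => ?_
    have hrange : Finset.range N = Finset.range ((N - 1) + 1) := by congr 1; omega
    set vt : ℕ → Ed d := fun k => if h : k < N - 1 then v ⟨k, h⟩ else 0 with hvt
    have hAapply : ∀ k : ℕ, k < N - 1 → Acoef d N (k + 1) v = vt k := by
      intro k hk
      rw [Acoef, dif_pos ⟨by omega, by omega⟩, hvt]
      simp only [Nat.add_sub_cancel, hk, dif_pos]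
      rfl
    have hA0 : Acoef d N 0 v = 0 := by rw [Acoef, dif_neg (by omega)]; rfl
    have hAN : Acoef d N ((N - 1) + 1) v = 0 := by
      rw [Acoef, dif_neg (by omega)]; rfl
    have hRHS : (∑ j : Fin (N - 1), (nodeE S x y N z j).comp
        (ContinuousLinearMap.proj j)) v
        = ∑ k ∈ Finset.range (N - 1), (D2 S (P k) (P (k + 1)) (vt k)
            + D1 S (P (k + 1)) (P (k + 2)) (vt k)) := by
      rw [ContinuousLinearMap.sum_apply]
      rw [← Fin.sum_univ_eq_sum_range (fun k => D2 S (P k) (P (k + 1)) (vt k)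
            + D1 S (P (k + 1)) (P (k + 2)) (vt k)) (N - 1)]
      apply Finset.sum_congr rfl
      intro j _
      have hvj : vt (j : ℕ) = v j := by
        rw [hvt]
        simp only [j.isLt, dif_pos]
      rw [ContinuousLinearMap.comp_apply, ContinuousLinearMap.proj_apply, ← hvj]
      simp only [nodeE, ContinuousLinearMap.add_apply, ← hP]
    have hLHS : (∑ k ∈ Finset.range N, ((fderiv ℝ S (P k, P (k + 1))).comp
        ((Acoef d N k).prod (Acoef d N (k + 1))))) v
        = ∑ k ∈ Finset.range N, (D1 S (P k) (P (k + 1)) (Acoef d N k v)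
            + D2 S (P k) (P (k + 1)) (Acoef d N (k + 1) v)) := by
      rw [ContinuousLinearMap.sum_apply]
      apply Finset.sum_congr rfl
      intro k _
      rw [ContinuousLinearMap.comp_apply, ContinuousLinearMap.prod_apply]
      exact fderiv_split hC2 _ _ _ _
    rw [hRHS, hLHS, Finset.sum_add_distrib]
    have h1 : ∑ k ∈ Finset.range N, D1 S (P k) (P (k + 1)) (Acoef d N k v)
        = ∑ k ∈ Finset.range (N - 1), D1 S (P (k + 1)) (P (k + 2)) (vt k) := by
      rw [hrange, Finset.sum_range_succ']
      rw [hA0]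
      simp only [map_zero, add_zero]
      apply Finset.sum_congr rfl
      intro k hk
      rw [hAapply k (Finset.mem_range.1 hk)]
    have h2 : ∑ k ∈ Finset.range N, D2 S (P k) (P (k + 1)) (Acoef d N (k + 1) v)
        = ∑ k ∈ Finset.range (N - 1), D2 S (P k) (P (k + 1)) (vt k) := by
      rw [hrange, Finset.sum_range_succ]
      rw [hAN]
      simp only [map_zero, add_zero]
      apply Finset.sum_congr rfl
      intro k hk
      rw [hAapply k (Finset.mem_range.1 hk)]
    rw [Finset.sum_add_distrib, h1, h2]
    ring
  rw [hmaps]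
  exact hsum

lemma crit_iff (hC2 : ContDiff ℝ 2 S) (x y : Ed d) (N : ℕ) (hN : 1 ≤ N)
    (z : Fin (N - 1) → Ed d) :
    fderiv ℝ (fixedAct S x y N) z = 0 ↔
      ∀ j : Fin (N - 1), nodeE S x y N z j = 0 := by
  have hfd := fixedAct_hasFDerivAt hC2 x y N hN z
  rw [hfd.fderiv]
  constructor
  · intro hzero j
    ext η
    have happ := DFunLike.congr_fun hzero
      (Pi.single (M := fun _ : Fin (N - 1) => Ed d) j η)
    rw [ContinuousLinearMap.sum_apply] at happ
    have hterm : ∀ i : Fin (N - 1),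
        ((nodeE S x y N z i).comp (ContinuousLinearMap.proj i))
          (Pi.single (M := fun _ : Fin (N - 1) => Ed d) j η)
        = if i = j then nodeE S x y N z i η else 0 := by
      intro i
      rw [ContinuousLinearMap.comp_apply, ContinuousLinearMap.proj_apply,
        Pi.single_apply]
      split
      · next hh => rw [hh]
      · simp
    rw [Finset.sum_congr rfl (fun i _ => hterm i)] at happ
    rw [Finset.sum_ite_eq' Finset.univ j (fun i => nodeE S x y N z i η)] at happ
    simp only [Finset.mem_univ, if_true, ContinuousLinearMap.zero_apply] at happ
    simpa using happ
  · intro hall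
    have : ∀ j : Fin (N - 1), (nodeE S x y N z j).comp
        (ContinuousLinearMap.proj (R := ℝ) (φ := fun _ : Fin (N - 1) => Ed d) j)
        = (0 : (Fin (N - 1) → Ed d) →L[ℝ] ℝ) := by
      intro j; rw [hall j, ContinuousLinearMap.zero_comp]
    rw [Finset.sum_congr rfl (fun j _ => this j)]
    simp


/-- two-step recursion -/
def twoStep {d : ℕ} (g : Ed d → Ed d → Ed d) (a b : Ed d) : ℕ → Ed d
  | 0 => a
  | 1 => b
  | (n + 2) => g (twoStep g a b n) (twoStep g a b (n + 1))

lemma step_fwd {d : ℕ} {S : Ed d × Ed d → ℝ} (hC2 : ContDiff ℝ 2 S) (A : ℝ) (hA : 0 < A)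
    (htwist : ∀ (x y ξ : Ed d),
      iteratedFDeriv ℝ 2 S (x, y) ![(ξ, 0), (0, ξ)] ≤ -A * ‖ξ‖ ^ 2)
    (a b : Ed d) : ∃! c, D2 S a b + D1 S b c = 0 := by
  obtain ⟨inj, surj⟩ := bij_D1 hC2 A hA htwist b
  obtain ⟨c, hc⟩ := surj (-(D2 S a b))
  have hc' : D1 S b c = -(D2 S a b) := hc
  refine ⟨c, show D2 S a b + D1 S b c = 0 by rw [hc']; abel, ?_⟩
  intro c' h'
  apply inj
  show D1 S b c' = D1 S b c
  rw [hc', eq_neg_of_add_eq_zero_right h']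

lemma step_bwd {d : ℕ} {S : Ed d × Ed d → ℝ} (hC2 : ContDiff ℝ 2 S) (A : ℝ) (hA : 0 < A)
    (htwist : ∀ (x y ξ : Ed d),
      iteratedFDeriv ℝ 2 S (x, y) ![(ξ, 0), (0, ξ)] ≤ -A * ‖ξ‖ ^ 2)
    (b c : Ed d) : ∃! a, D2 S a b + D1 S b c = 0 := by
  obtain ⟨inj, surj⟩ := bij_D2 hC2 A hA htwist b
  obtain ⟨a, ha⟩ := surj (-(D1 S b c))
  have ha' : D2 S a b = -(D1 S b c) := ha
  refine ⟨a, show D2 S a b + D1 S b c = 0 by rw [ha']; abel, ?_⟩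
  intro a' h'
  apply inj
  show D2 S a' b = D2 S a b
  rw [ha', eq_neg_of_add_eq_zero_left h']

theorem stmt_4' (d : ℕ) (S : Ed d × Ed d → ℝ) (hC2 : ContDiff ℝ 2 S)
    (A : ℝ) (hA : 0 < A)
    (htwist : ∀ (x y ξ : Ed d),
      iteratedFDeriv ℝ 2 S (x, y) ![(ξ, 0), (0, ξ)] ≤ -A * ‖ξ‖ ^ 2)
    (h : NoConjPts S) :
    ∀ (x y : Ed d) (N : ℕ), 1 ≤ N →
      ∃! u : ℤ → Ed d, IsExtremal S u ∧ u 0 = x ∧ u (N : ℤ) = y := by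
  intro x y N hN
  have hstepF := step_fwd hC2 A hA htwist
  have hstepB := step_bwd hC2 A hA htwist
  -- the interior critical data
  have hz : ∃ z : Fin (N - 1) → Ed d, (∀ j : Fin (N - 1), nodeE S x y N z j = 0) ∧
      (∀ z', (∀ j : Fin (N - 1), nodeE S x y N z' j = 0) → z' = z) := by
    by_cases hN2 : 2 ≤ N
    · obtain ⟨z, hc, _, hu⟩ := h x y N hN2
      exact ⟨z, (crit_iff hC2 x y N hN z).1 hc,
        fun z' hz' => hu z' ((crit_iff hC2 x y N hN z').2 hz')⟩
    · have hN1 : N = 1 := by omega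
      refine ⟨fun j => 0, fun j => absurd j.isLt (by omega), fun z' _ => ?_⟩
      funext j
      exact absurd j.isLt (by omega)
  obtain ⟨z, hnode, hnodeuniq⟩ := hz
  have hP0 : path x y N z 0 = x := by simp [path]
  have hP1N : N ≤ 1 → path x y N z 1 = y := by
    intro h1
    have : N = 1 := by omega
    subst this
    show (if h0 : (1:ℕ) = 0 then x else if h : 1 < 1 then _ else y) = y
    rw [dif_neg (by omega), dif_neg (by omega)]
  have hPN : path x y N z N = y := by
    show (if h0 : N = 0 then x else if h : N < N then _ else y) = y
    rw [dif_neg (by omega), dif_neg (lt_irrefl N)]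
  obtain ⟨g1, hg1⟩ : ∃ g1 : Ed d → Ed d → Ed d,
      ∀ a b, D2 S a b + D1 S b (g1 a b) = 0 :=
    ⟨fun a b => (hstepF a b).exists.choose, fun a b => (hstepF a b).exists.choose_spec⟩
  obtain ⟨g2, hg2⟩ : ∃ g2 : Ed d → Ed d → Ed d,
      ∀ c b, D2 S (g2 c b) b + D1 S b c = 0 :=
    ⟨fun c b => (hstepB b c).exists.choose, fun c b => (hstepB b c).exists.choose_spec⟩
  set f : ℕ → Ed d := twoStep g1 (path x y N z 0) (path x y N z 1) with hf
  set bw : ℕ → Ed d := twoStep g2 (path x y N z 1) (path x y N z 0) with hbw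
  have hfspec : ∀ n : ℕ, D2 S (f n) (f (n + 1)) + D1 S (f (n + 1)) (f (n + 2)) = 0 := by
    intro n
    have e : f (n + 2) = g1 (f n) (f (n + 1)) := rfl
    rw [e]; exact hg1 _ _
  have hbspec : ∀ n : ℕ, D2 S (bw (n + 2)) (bw (n + 1)) + D1 S (bw (n + 1)) (bw n) = 0 := by
    intro n
    have e : bw (n + 2) = g2 (bw n) (bw (n + 1)) := rfl
    rw [e]; exact hg2 _ _
  -- f follows the path
  have hfP : ∀ k : ℕ, k ≤ N → f k = path x y N z k := by
    intro k
    induction k using Nat.strong_induction_on with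
    | _ k ih =>
      match k with
      | 0 => intro _; rfl
      | 1 => intro _; rfl
      | (k + 2) =>
        intro hk2
        have e1 : f k = path x y N z k := ih k (by omega) (by omega)
        have e2 : f (k + 1) = path x y N z (k + 1) := ih (k + 1) (by omega) (by omega)
        have hnd : D2 S (path x y N z k) (path x y N z (k + 1))
            + D1 S (path x y N z (k + 1)) (path x y N z (k + 2)) = 0 := by
          have := hnode ⟨k, by omega⟩
          simpa [nodeE] using this
        have e3 : f (k + 2) = g1 (path x y N z k) (path x y N z (k + 1)) := by
          rw [show f (k + 2) = g1 (f k) (f (k + 1)) from rfl, e1, e2]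
        rw [e3]
        exact (hstepF (path x y N z k) (path x y N z (k + 1))).unique (hg1 _ _) hnd
  -- the bi-infinite sequence
  set u : ℤ → Ed d := fun n => if 0 ≤ n then f n.toNat else bw (1 - n).toNat with hu
  have huf : ∀ m : ℕ, u (m : ℤ) = f m := by
    intro m
    simp [hu]
  have hub : ∀ m : ℕ, u (1 - (m : ℤ)) = bw m := by
    intro m
    match m with
    | 0 => show u 1 = bw 0; rw [show (1 : ℤ) = ((1 : ℕ) : ℤ) from rfl, huf 1]; rfl
    | 1 => show u 0 = bw 1; rw [show (0 : ℤ) = ((0 : ℕ) : ℤ) from rfl, huf 0]; rfl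
    | (m + 2) =>
      have hneg : ¬ (0 ≤ 1 - ((m + 2 : ℕ) : ℤ)) := by push_cast; omega
      have e : u (1 - ((m + 2 : ℕ) : ℤ)) = bw (1 - (1 - ((m + 2 : ℕ) : ℤ))).toNat :=
        if_neg hneg
      rw [e, show (1 - (1 - ((m + 2 : ℕ) : ℤ))).toNat = m + 2 from by omega]
  have hext : IsExtremal S u := by
    intro n
    by_cases hn : 1 ≤ n
    · obtain ⟨m, hm⟩ : ∃ m : ℕ, n - 1 = (m : ℤ) := ⟨(n - 1).toNat, by omega⟩
      have e2 : n = ((m + 1 : ℕ) : ℤ) := by push_cast; omega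
      have e3 : n + 1 = ((m + 2 : ℕ) : ℤ) := by push_cast; omega
      rw [e3, hm, e2, huf, huf, huf]
      exact hfspec m
    · obtain ⟨m, hm⟩ : ∃ m : ℕ, n + 1 = 1 - (m : ℤ) := ⟨(-n).toNat, by omega⟩
      have e1 : n - 1 = 1 - ((m + 2 : ℕ) : ℤ) := by push_cast; omega
      have e2 : n = 1 - ((m + 1 : ℕ) : ℤ) := by push_cast; omega
      rw [hm, e1, e2, hub, hub, hub]
      exact hbspec m
  have hu0 : u 0 = x := by
    rw [show (0 : ℤ) = ((0 : ℕ) : ℤ) from rfl, huf 0]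
    show path x y N z 0 = x
    exact hP0
  have huN : u (N : ℤ) = y := by
    rw [huf N, hfP N le_rfl]
    exact hPN
  refine ⟨u, ⟨hext, hu0, huN⟩, ?_⟩
  rintro v ⟨hvext, hv0, hvN⟩
  -- v's interior satisfies the node equations, hence equals z
  have hv1 : v 1 = path x y N z 1 := by
    by_cases hN2 : 2 ≤ N
    · set zv : Fin (N - 1) → Ed d := fun j => v (((j : ℕ) : ℤ) + 1) with hzv
      have hPv : ∀ k : ℕ, k ≤ N → path x y N zv k = v (k : ℤ) := by
        intro k hk
        by_cases h0 : k = 0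
        · subst h0
          show (if h0 : (0:ℕ) = 0 then x else _) = v 0
          rw [dif_pos rfl, hv0]
        · by_cases h1 : k < N
          · show (if h0 : k = 0 then x else if h : k < N then zv ⟨k - 1, by omega⟩ else y)
              = v (k : ℤ)
            rw [dif_neg h0, dif_pos h1]
            show v (((k - 1 : ℕ) : ℤ) + 1) = v (k : ℤ)
            rw [show (((k - 1 : ℕ) : ℤ) + 1) = ((k : ℕ) : ℤ) from by omega]
          · have hkN : k = N := by omega
            subst hkN
            show (if h0 : k = 0 then x else if h : k < k then _ else y) = v (k : ℤ)
            rw [dif_neg h0, dif_neg (lt_irrefl k), hvN]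
      have hnodev : ∀ j : Fin (N - 1), nodeE S x y N zv j = 0 := by
        intro j
        have hj : (j : ℕ) < N - 1 := j.isLt
        have e0 : path x y N zv (j : ℕ) = v ((j : ℕ) : ℤ) := hPv _ (by omega)
        have e1 : path x y N zv ((j : ℕ) + 1) = v (((j : ℕ) : ℤ) + 1) := by
          rw [hPv _ (by omega)]; congr 1 <;> omega
        have e2 : path x y N zv ((j : ℕ) + 2) = v (((j : ℕ) : ℤ) + 2) := by
          rw [hPv _ (by omega)]; congr 1 <;> omega
        have hv := hvext (((j : ℕ) : ℤ) + 1)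
        rw [add_sub_cancel_right] at hv
        rw [nodeE, e0, e1, e2]
        rw [show ((j : ℕ) : ℤ) + 1 + 1 = ((j : ℕ) : ℤ) + 2 from by ring] at hv
        exact hv
      have hzeq : zv = z := hnodeuniq zv hnodev
      have hz0 : zv ⟨0, by omega⟩ = v 1 := by
        show v ((((⟨0, by omega⟩ : Fin (N - 1)) : ℕ) : ℤ) + 1) = v 1
        norm_num
      rw [← hz0, hzeq]
      show z ⟨0, by omega⟩
        = (if h0 : (1:ℕ) = 0 then x else if h : 1 < N then z ⟨1 - 1, by omega⟩ else y)
      rw [dif_neg (by omega), dif_pos (by omega)]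
    · have hN1 : N = 1 := by omega
      rw [hP1N (by omega), ← hvN, hN1]
      norm_num
  have hv1' : v 1 = u 1 := by
    rw [hv1, show (1 : ℤ) = ((1 : ℕ) : ℤ) from rfl, huf 1]
    rfl
  have hv0' : v 0 = u 0 := by rw [hv0, hu0]
  -- forward agreement
  have hfwd : ∀ m : ℕ, v (m : ℤ) = u (m : ℤ) := by
    intro m
    induction m using Nat.strong_induction_on with
    | _ m ih =>
      match m with
      | 0 => exact hv0'
      | 1 => exact hv1'
      | (m + 2) =>
        have e1 : v (m : ℤ) = u (m : ℤ) := ih m (by omega)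
        have e2 : v ((m + 1 : ℕ) : ℤ) = u ((m + 1 : ℕ) : ℤ) := ih (m + 1) (by omega)
        have hvx := hvext (((m + 1 : ℕ) : ℤ))
        have hux := hext (((m + 1 : ℕ) : ℤ))
        have c1 : ((m + 1 : ℕ) : ℤ) - 1 = (m : ℤ) := by push_cast; ring
        have c2 : ((m + 1 : ℕ) : ℤ) + 1 = ((m + 2 : ℕ) : ℤ) := by push_cast; ring
        rw [c1, c2] at hvx hux
        rw [e1, e2] at hvx
        exact (hstepF (u (m : ℤ)) (u ((m + 1 : ℕ) : ℤ))).unique hvx hux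
  -- backward agreement
  have hbwd : ∀ m : ℕ, v (1 - (m : ℤ)) = u (1 - (m : ℤ)) := by
    intro m
    induction m using Nat.strong_induction_on with
    | _ m ih =>
      match m with
      | 0 => simpa using hv1'
      | 1 => simpa using hv0'
      | (m + 2) =>
        have e1 : v (1 - (m : ℤ)) = u (1 - (m : ℤ)) := ih m (by omega)
        have e2 : v (1 - ((m + 1 : ℕ) : ℤ)) = u (1 - ((m + 1 : ℕ) : ℤ)) := ih (m + 1) (by omega)
        have hvx := hvext (1 - ((m + 1 : ℕ) : ℤ))
        have hux := hext (1 - ((m + 1 : ℕ) : ℤ))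
        have c1 : 1 - ((m + 1 : ℕ) : ℤ) - 1 = 1 - ((m + 2 : ℕ) : ℤ) := by push_cast; ring
        have c2 : 1 - ((m + 1 : ℕ) : ℤ) + 1 = 1 - ((m : ℕ) : ℤ) := by push_cast; ring
        rw [c1, c2] at hvx hux
        rw [e1, e2] at hvx
        exact (hstepB (u (1 - ((m + 1 : ℕ) : ℤ))) (u (1 - (m : ℤ)))).unique hvx hux
  funext n
  by_cases hn : 0 ≤ n
  · have : n = ((n.toNat : ℕ) : ℤ) := by omega
    rw [this]; exact hfwd n.toNat
  · have : n = 1 - (((1 - n).toNat : ℕ) : ℤ) := by omega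
    rw [this]; exact hbwd (1 - n).toNat


end Stmt4Aux

/-- If `S` has no conjugate points, then for every `x, y ∈ ℝ^d` and every `N ≥ 1`,
there exists a unique extremal sequence `(x_n)_{n∈ℤ}` with `x_0 = x` and `x_N = y`. -/
theorem stmt_4 (d : ℕ) (hd : 1 ≤ d) (S : Ed d × Ed d → ℝ) (hS : IsGenFn S)
    (h : NoConjPts S) :
    ∀ (x y : Ed d) (N : ℕ), 1 ≤ N →
      ∃! u : ℤ → Ed d, IsExtremal S u ∧ u 0 = x ∧ u (N : ℤ) = y := by
  obtain ⟨hC2, _, A, hA, htwist⟩ := hS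
  exact Stmt4Aux.stmt_4' d S hC2 A hA htwist h


end
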